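/- For θ ∈ (0,1), define f_θ(x) = log[(cosh(x/2) + θ sinh(x/2)) / (cosh(x/2) − θ sinh(x/2))]. Then f_θ is a strictly increasing odd function on ℝ, concave on [0,∞). Moreover, for every compact interval I ⊂ (0,1) there exist constants κ₂ ≥ κ₁ > 0, depending only on I, such that θ x / (1 + κ₂ x²)^{1/2} ≤ f_θ(x) ≤ θ x / (1 + κ₁ x²)^{1/2} for all x > 0 and all θ ∈ I. -/

import Mathlib

set_option maxHeartbeats 1000000

noncomputable section

/-- `f_θ(x) = log[(cosh(x/2) + θ sinh(x/2)) / (cosh(x/2) − θ sinh(x/2))]`. -/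
def fbias (θ x : ℝ) : ℝ :=
  Real.log ((Real.cosh (x / 2) + θ * Real.sinh (x / 2)) /
    (Real.cosh (x / 2) - θ * Real.sinh (x / 2)))

open Real Set

lemma den_pos {θ : ℝ} (hθ0 : 0 ≤ θ) (hθ1 : θ < 1) (u : ℝ) :
    0 < Real.cosh u - θ * Real.sinh u ∧ 0 < Real.cosh u + θ * Real.sinh u := by
  have h1 : Real.sinh u < Real.cosh u := Real.sinh_lt_cosh u
  have h2 : -Real.sinh u < Real.cosh u := by simpa using Real.sinh_lt_cosh (-u)
  have hc := Real.cosh_pos u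
  constructor <;>
    nlinarith [mul_nonneg hθ0 (sub_pos.2 h1).le, mul_nonneg hθ0 (sub_pos.2 h2).le,
      mul_pos (sub_pos.2 hθ1) hc]

lemma fbias_hasDerivAt {θ : ℝ} (hθ0 : 0 ≤ θ) (hθ1 : θ < 1) (x : ℝ) :
    HasDerivAt (fbias θ) (θ / (1 + (1 - θ ^ 2) * Real.sinh (x / 2) ^ 2)) x := by
  obtain ⟨hB, hA⟩ := den_pos hθ0 hθ1 (x / 2)
  have h2 : HasDerivAt (fun y : ℝ => y / 2) (1 / 2 : ℝ) x := by
    simpa using (hasDerivAt_id x).div_const 2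
  have hcosh : HasDerivAt (fun y : ℝ => Real.cosh (y / 2)) (Real.sinh (x / 2) * (1 / 2)) x :=
    by have := (Real.hasDerivAt_cosh (x / 2)).comp x h2; exact this
  have hsinh : HasDerivAt (fun y : ℝ => Real.sinh (y / 2)) (Real.cosh (x / 2) * (1 / 2)) x :=
    by have := (Real.hasDerivAt_sinh (x / 2)).comp x h2; exact this
  have hA' : HasDerivAt (fun y : ℝ => Real.cosh (y / 2) + θ * Real.sinh (y / 2))
      (Real.sinh (x / 2) * (1 / 2) + θ * (Real.cosh (x / 2) * (1 / 2))) x :=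
    hcosh.add (hsinh.const_mul θ)
  have hB' : HasDerivAt (fun y : ℝ => Real.cosh (y / 2) - θ * Real.sinh (y / 2))
      (Real.sinh (x / 2) * (1 / 2) - θ * (Real.cosh (x / 2) * (1 / 2))) x :=
    hcosh.sub (hsinh.const_mul θ)
  have hlogA := (Real.hasDerivAt_log hA.ne').comp x hA'
  have hlogB := (Real.hasDerivAt_log hB.ne').comp x hB'
  have heq : fbias θ = fun y : ℝ =>
      Real.log (Real.cosh (y / 2) + θ * Real.sinh (y / 2)) -
        Real.log (Real.cosh (y / 2) - θ * Real.sinh (y / 2)) := by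
    funext y
    obtain ⟨hB2, hA2⟩ := den_pos hθ0 hθ1 (y / 2)
    exact Real.log_div hA2.ne' hB2.ne'
  rw [heq]
  refine (hlogA.sub hlogB).congr_deriv (Eq.symm ?_)
  have hc2 : Real.cosh (x / 2) ^ 2 = Real.sinh (x / 2) ^ 2 + 1 := Real.cosh_sq (x / 2)
  have hden : 0 < 1 + (1 - θ ^ 2) * Real.sinh (x / 2) ^ 2 := by nlinarith [sq_nonneg (Real.sinh (x/2)), sq_nonneg θ]
  field_simp
  linear_combination ((2*θ^3 - 2*θ)*Real.sinh (x/2)^2) * hc2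

lemma cosh_quad {u : ℝ} (hu : 0 ≤ u) : 1 + u ^ 2 / 2 ≤ Real.cosh u := by
  have hder : ∀ y : ℝ, HasDerivAt (fun t : ℝ => Real.cosh t - (1 + t ^ 2 / 2))
      (Real.sinh y - y) y := by
    intro y
    have := (Real.hasDerivAt_cosh y).sub (((hasDerivAt_pow 2 y).div_const 2).const_add 1)
    refine this.congr_deriv (Eq.symm ?_)
    norm_num
  have hmono : MonotoneOn (fun t : ℝ => Real.cosh t - (1 + t ^ 2 / 2)) (Ici 0) := by
    apply monotoneOn_of_deriv_nonneg (convex_Ici 0)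
    · exact fun y _ => ((hder y).differentiableAt).continuousAt.continuousWithinAt
    · exact fun y _ => ((hder y).differentiableAt).differentiableWithinAt
    · intro y hy
      rw [interior_Ici] at hy
      rw [(hder y).deriv]
      have : y ≤ Real.sinh y := Real.self_le_sinh_iff.2 hy.le
      linarith
  have := hmono (self_mem_Ici) hu hu
  simp at this
  linarith

lemma sinh_cubic {u : ℝ} (hu : 0 ≤ u) : u + u ^ 3 / 6 ≤ Real.sinh u := by
  have hder : ∀ y : ℝ, HasDerivAt (fun t : ℝ => Real.sinh t - (t + t ^ 3 / 6))
      (Real.cosh y - (1 + y ^ 2 / 2)) y := by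
    intro y
    have := (Real.hasDerivAt_sinh y).sub
      ((hasDerivAt_id y).add ((hasDerivAt_pow 3 y).div_const 6))
    refine this.congr_deriv (Eq.symm ?_)
    norm_num; ring
  have hmono : MonotoneOn (fun t : ℝ => Real.sinh t - (t + t ^ 3 / 6)) (Ici 0) := by
    apply monotoneOn_of_deriv_nonneg (convex_Ici 0)
    · exact fun y _ => ((hder y).differentiableAt).continuousAt.continuousWithinAt
    · exact fun y _ => ((hder y).differentiableAt).differentiableWithinAt
    · intro y hy
      rw [interior_Ici] at hy
      rw [(hder y).deriv]
      have := cosh_quad hy.le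
      linarith
  have := hmono (self_mem_Ici) hu hu
  simp at this
  linarith

lemma log_ratio_ge {v : ℝ} (h0 : 0 ≤ v) (h1 : v < 1) :
    2 * v ≤ Real.log ((1 + v) / (1 - v)) := by
  have hder : ∀ y ∈ Ico (0 : ℝ) 1, HasDerivAt
      (fun w : ℝ => Real.log (1 + w) - Real.log (1 - w) - 2 * w)
      ((1 + y)⁻¹ + (1 - y)⁻¹ - 2) y := by
    intro y hy
    have hy1 : (0:ℝ) < 1 + y := by linarith [hy.1]
    have hy2 : (0:ℝ) < 1 - y := by linarith [hy.2]
    have d1 : HasDerivAt (fun w : ℝ => Real.log (1 + w)) ((1 + y)⁻¹ * 1) y :=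
      (Real.hasDerivAt_log hy1.ne').comp y ((hasDerivAt_id y).const_add 1)
    have d2 : HasDerivAt (fun w : ℝ => Real.log (1 - w)) ((1 - y)⁻¹ * (-1)) y :=
      (Real.hasDerivAt_log hy2.ne').comp y ((hasDerivAt_id y).const_sub 1)
    have d3 : HasDerivAt (fun w : ℝ => 2 * w) 2 y := by
      simpa using (hasDerivAt_id y).const_mul 2
    refine ((d1.sub d2).sub d3).congr_deriv (Eq.symm ?_)
    ring
  have hmono : MonotoneOn (fun w : ℝ => Real.log (1 + w) - Real.log (1 - w) - 2 * w)
      (Ico (0:ℝ) 1) := by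
    apply monotoneOn_of_deriv_nonneg (convex_Ico 0 1)
    · exact fun y hy => ((hder y hy).differentiableAt).continuousAt.continuousWithinAt
    · intro y hy
      rw [interior_Ico] at hy
      exact ((hder y (Ioo_subset_Ico_self hy)).differentiableAt).differentiableWithinAt
    · intro y hy
      rw [interior_Ico] at hy
      rw [(hder y (Ioo_subset_Ico_self hy)).deriv]
      have hy1 : (0:ℝ) < 1 + y := by linarith [hy.1]
      have hy2 : (0:ℝ) < 1 - y := by linarith [hy.2]
      have : (1 + y)⁻¹ + (1 - y)⁻¹ - 2 = 2 * y ^ 2 / ((1 + y) * (1 - y)) := by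
        field_simp; ring
      rw [this]
      positivity
  have key := hmono (by constructor <;> norm_num) ⟨h0, h1⟩ h0
  simp only at key
  have h1v : (0:ℝ) < 1 + v := by linarith
  have h2v : (0:ℝ) < 1 - v := by linarith
  rw [Real.log_div h1v.ne' h2v.ne']
  simp at key
  linarith

lemma tanh_lower {u : ℝ} (hu : 0 < u) :
    u / Real.sqrt (1 + u ^ 2) ≤ Real.sinh u / Real.cosh u := by
  have hs : u ≤ Real.sinh u := Real.self_le_sinh_iff.2 hu.le
  have hc := Real.cosh_pos u
  have hsq : (0:ℝ) < 1 + u ^ 2 := by positivity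
  have hsqrt : (0:ℝ) < Real.sqrt (1 + u ^ 2) := Real.sqrt_pos.2 hsq
  rw [div_le_div_iff₀ hsqrt hc]
  have goal2 : (u * Real.cosh u) ^ 2 ≤ (Real.sinh u * Real.sqrt (1 + u ^ 2)) ^ 2 := by
    have h1 : Real.sqrt (1 + u ^ 2) ^ 2 = 1 + u ^ 2 := Real.sq_sqrt hsq.le
    have h2 : Real.cosh u ^ 2 = Real.sinh u ^ 2 + 1 := Real.cosh_sq u
    nlinarith [hs, hu.le]
  have hrhs : 0 ≤ Real.sinh u * Real.sqrt (1 + u ^ 2) := by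
    have : 0 < Real.sinh u := lt_of_lt_of_le hu hs
    positivity
  exact le_of_pow_le_pow_left₀ two_ne_zero hrhs goal2

lemma poly_ineq {κ y : ℝ} (hκ : 0 < κ) (hκ1 : 30 * κ ≤ 1) (hy : 0 ≤ y) :
    (1 + κ * y) ^ 3 ≤ (1 + 30 * κ * (y / 4 + y ^ 2 / 48 + y ^ 3 / 2304)) ^ 2 := by
  nlinarith [sq_nonneg (30 * κ * (y / 4 + y ^ 2 / 48 + y ^ 3 / 2304)),
    mul_nonneg (mul_nonneg hκ.le hy) hy,
    mul_nonneg (mul_nonneg (mul_nonneg hκ.le hy) hy) hy,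
    mul_nonneg (mul_nonneg (mul_nonneg hκ.le hy) hy) (mul_nonneg hy (sub_nonneg.2 hκ1)),
    mul_nonneg (mul_nonneg (mul_nonneg hκ.le hy) hy) (sub_nonneg.2 hκ1),
    mul_nonneg hκ.le hy]

lemma sqrtfun_hasDerivAt {θ κ : ℝ} (hκ : 0 < κ) (y : ℝ) :
    HasDerivAt (fun t : ℝ => θ * t / Real.sqrt (1 + κ * t ^ 2))
      (θ / Real.sqrt (1 + κ * y ^ 2) ^ 3) y := by
  have hD : (0:ℝ) < 1 + κ * y ^ 2 := by positivity
  have hsqrt : (0:ℝ) < Real.sqrt (1 + κ * y ^ 2) := Real.sqrt_pos.2 hD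
  have hsq : Real.sqrt (1 + κ * y ^ 2) ^ 2 = 1 + κ * y ^ 2 := Real.sq_sqrt hD.le
  have hnum : HasDerivAt (fun t : ℝ => θ * t) θ y := by
    simpa using (hasDerivAt_id y).const_mul θ
  have hinner : HasDerivAt (fun t : ℝ => 1 + κ * t ^ 2) (κ * (2 * y)) y := by
    have := ((hasDerivAt_pow 2 y).const_mul κ).const_add 1
    refine this.congr_deriv (Eq.symm ?_)
    norm_num
  have hden : HasDerivAt (fun t : ℝ => Real.sqrt (1 + κ * t ^ 2))
      (κ * (2 * y) / (2 * Real.sqrt (1 + κ * y ^ 2))) y := hinner.sqrt hD.ne'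
  have := hnum.div hden hsqrt.ne'
  refine this.congr_deriv (Eq.symm ?_)
  field_simp
  linear_combination (-θ) * hsq

lemma fbias_zero (θ : ℝ) : fbias θ 0 = 0 := by
  simp [fbias]

lemma upper_bound {θ b : ℝ} (hθ : 0 < θ) (hθb : θ ≤ b) (hb : b < 1) {x : ℝ} (hx : 0 < x) :
    fbias θ x ≤ θ * x / Real.sqrt (1 + (1 - b ^ 2) / 30 * x ^ 2) := by
  set κ : ℝ := (1 - b ^ 2) / 30 with hκdef
  have hb0 : 0 < b := lt_of_lt_of_le hθ hθb
  have hκ : 0 < κ := by rw [hκdef]; nlinarith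
  have hκθ : 30 * κ ≤ 1 - θ ^ 2 := by rw [hκdef]; nlinarith
  have hκ1 : 30 * κ ≤ 1 := by rw [hκdef]; nlinarith
  have hθ1 : θ < 1 := lt_of_le_of_lt hθb hb
  -- key derivative inequality
  have key : ∀ y : ℝ, 0 < y →
      Real.sqrt (1 + κ * y ^ 2) ^ 3 ≤ 1 + (1 - θ ^ 2) * Real.sinh (y / 2) ^ 2 := by
    intro y hy
    have hD : (0:ℝ) < 1 + κ * y ^ 2 := by positivity
    have hsq : Real.sqrt (1 + κ * y ^ 2) ^ 2 = 1 + κ * y ^ 2 := Real.sq_sqrt hD.le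
    have hs : y / 2 + (y / 2) ^ 3 / 6 ≤ Real.sinh (y / 2) := sinh_cubic (by linarith)
    have hs0 : 0 < y / 2 + (y / 2) ^ 3 / 6 := by positivity
    have hP := poly_ineq hκ hκ1 (sq_nonneg y)
    have hRnn : (0:ℝ) ≤ 1 + (1 - θ ^ 2) * Real.sinh (y / 2) ^ 2 := by nlinarith [sq_nonneg (Real.sinh (y/2))]
    refine le_of_pow_le_pow_left₀ two_ne_zero hRnn ?_
    have h6 : (Real.sqrt (1 + κ * y ^ 2) ^ 3) ^ 2 = (1 + κ * y ^ 2) ^ 3 := by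
      rw [← pow_mul, show 3 * 2 = 2 * 3 by ring, pow_mul, hsq]
    rw [h6]
    have hmid : 30 * κ * (y ^ 2 / 4 + (y ^ 2) ^ 2 / 48 + (y ^ 2) ^ 3 / 2304) ≤
        (1 - θ ^ 2) * Real.sinh (y / 2) ^ 2 := by
      have h1 : y ^ 2 / 4 + (y ^ 2) ^ 2 / 48 + (y ^ 2) ^ 3 / 2304 =
          (y / 2 + (y / 2) ^ 3 / 6) ^ 2 := by ring
      have h2 : (y / 2 + (y / 2) ^ 3 / 6) ^ 2 ≤ Real.sinh (y / 2) ^ 2 := by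
        nlinarith
      have h3 : 0 ≤ y ^ 2 / 4 + (y ^ 2) ^ 2 / 48 + (y ^ 2) ^ 3 / 2304 := by positivity
      calc 30 * κ * (y ^ 2 / 4 + (y ^ 2) ^ 2 / 48 + (y ^ 2) ^ 3 / 2304)
          ≤ (1 - θ ^ 2) * (y ^ 2 / 4 + (y ^ 2) ^ 2 / 48 + (y ^ 2) ^ 3 / 2304) := by
            apply mul_le_mul_of_nonneg_right hκθ h3
        _ ≤ (1 - θ ^ 2) * Real.sinh (y / 2) ^ 2 := by
            rw [h1] at *
            apply mul_le_mul_of_nonneg_left h2 (by nlinarith)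
    have hT0 : (0:ℝ) ≤ 30 * κ * (y ^ 2 / 4 + (y ^ 2) ^ 2 / 48 + (y ^ 2) ^ 3 / 2304) := by
      positivity
    nlinarith [hP, hmid, hT0, mul_nonneg (sub_nonneg.2 hmid)
      (by nlinarith [sq_nonneg (Real.sinh (y/2))] :
        (0:ℝ) ≤ 2 + (1 - θ ^ 2) * Real.sinh (y / 2) ^ 2 +
          30 * κ * (y ^ 2 / 4 + (y ^ 2) ^ 2 / 48 + (y ^ 2) ^ 3 / 2304))]
  -- monotone difference
  have hmono : MonotoneOn (fun y : ℝ =>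
      θ * y / Real.sqrt (1 + κ * y ^ 2) - fbias θ y) (Ici 0) := by
    have hder : ∀ y : ℝ, HasDerivAt (fun y : ℝ =>
        θ * y / Real.sqrt (1 + κ * y ^ 2) - fbias θ y)
        (θ / Real.sqrt (1 + κ * y ^ 2) ^ 3 -
          θ / (1 + (1 - θ ^ 2) * Real.sinh (y / 2) ^ 2)) y :=
      fun y => (sqrtfun_hasDerivAt hκ y).sub (fbias_hasDerivAt hθ.le hθ1 y)
    apply monotoneOn_of_deriv_nonneg (convex_Ici 0)
    · exact fun y _ => ((hder y).differentiableAt).continuousAt.continuousWithinAt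
    · exact fun y _ => ((hder y).differentiableAt).differentiableWithinAt
    · intro y hy
      rw [interior_Ici] at hy
      rw [(hder y).deriv]
      have h1 := key y hy
      have hD : (0:ℝ) < 1 + κ * y ^ 2 := by positivity
      have h2 : (0:ℝ) < Real.sqrt (1 + κ * y ^ 2) ^ 3 := by
        have := Real.sqrt_pos.2 hD; positivity
      have : θ / (1 + (1 - θ ^ 2) * Real.sinh (y / 2) ^ 2) ≤
          θ / Real.sqrt (1 + κ * y ^ 2) ^ 3 := by gcongr
      linarith
  have := hmono self_mem_Ici (le_of_lt hx : (0:ℝ) ≤ x) hx.le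
  simp only [fbias_zero, mul_zero, zero_div, sub_zero, zero_sub, mul_zero] at this
  linarith

lemma lower_bound {θ : ℝ} (hθ0 : 0 < θ) (hθ1 : θ < 1) {x : ℝ} (hx : 0 < x) :
    θ * x / Real.sqrt (1 + (1/4 : ℝ) * x ^ 2) ≤ fbias θ x := by
  have hs : 0 < Real.sinh (x / 2) := Real.sinh_pos_iff.2 (by linarith)
  have hc : 0 < Real.cosh (x / 2) := Real.cosh_pos _
  obtain ⟨hB, hA⟩ := den_pos hθ0.le hθ1 (x / 2)
  set s := Real.sinh (x / 2)
  set c := Real.cosh (x / 2)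
  have hv0 : 0 ≤ θ * (s / c) := by positivity
  have hv1 : θ * (s / c) < 1 := by
    rw [mul_div_assoc'] ; exact (div_lt_one hc).2 (by linarith)
  have L1 := log_ratio_ge hv0 hv1
  have harg : (1 + θ * (s / c)) / (1 - θ * (s / c)) = (c + θ * s) / (c - θ * s) := by
    rw [div_eq_div_iff (by linarith) hB.ne']
    field_simp
  rw [harg] at L1
  have L2 : (x / 2) / Real.sqrt (1 + (x / 2) ^ 2) ≤ s / c := tanh_lower (half_pos hx)
  have hre : θ * x / Real.sqrt (1 + (1/4 : ℝ) * x ^ 2) =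
      2 * θ * ((x / 2) / Real.sqrt (1 + (x / 2) ^ 2)) := by
    rw [show (1:ℝ) + (1/4) * x ^ 2 = 1 + (x / 2) ^ 2 by ring]
    ring
  rw [hre]
  calc 2 * θ * ((x / 2) / Real.sqrt (1 + (x / 2) ^ 2))
      ≤ 2 * θ * (s / c) := by
        apply mul_le_mul_of_nonneg_left L2 (by linarith)
    _ ≤ Real.log ((c + θ * s) / (c - θ * s)) := by linarith
    _ = fbias θ x := rfl

theorem stmt13 :
    (∀ θ : ℝ, θ ∈ Set.Ioo (0 : ℝ) 1 →
      StrictMono (fbias θ) ∧ (∀ x : ℝ, fbias θ (-x) = -(fbias θ x)) ∧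
        ConcaveOn ℝ (Set.Ici 0) (fbias θ)) ∧
    (∀ a b : ℝ, 0 < a → a ≤ b → b < 1 →
      ∃ κ₁ κ₂ : ℝ, 0 < κ₁ ∧ κ₁ ≤ κ₂ ∧
        ∀ θ ∈ Set.Icc a b, ∀ x : ℝ, 0 < x →
          θ * x / Real.sqrt (1 + κ₂ * x ^ 2) ≤ fbias θ x ∧
            fbias θ x ≤ θ * x / Real.sqrt (1 + κ₁ * x ^ 2)) := by
  constructor
  · rintro θ ⟨hθ0, hθ1⟩
    refine ⟨?_, ?_, ?_⟩
    · apply strictMono_of_deriv_pos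
      intro x
      rw [(fbias_hasDerivAt hθ0.le hθ1 x).deriv]
      have hθ2 : (0:ℝ) ≤ 1 - θ ^ 2 := by nlinarith
      have hpos : 0 < 1 + (1 - θ ^ 2) * Real.sinh (x / 2) ^ 2 := by
        nlinarith [mul_nonneg hθ2 (sq_nonneg (Real.sinh (x / 2)))]
      exact div_pos hθ0 hpos
    · intro x
      unfold fbias
      rw [show -x / 2 = -(x / 2) by ring, Real.cosh_neg, Real.sinh_neg]
      rw [show (Real.cosh (x / 2) + θ * -Real.sinh (x / 2)) /
          (Real.cosh (x / 2) - θ * -Real.sinh (x / 2)) =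
          ((Real.cosh (x / 2) + θ * Real.sinh (x / 2)) /
            (Real.cosh (x / 2) - θ * Real.sinh (x / 2)))⁻¹ by
        rw [inv_div]; ring_nf]
      exact Real.log_inv _
    · refine AntitoneOn.concaveOn_of_deriv (convex_Ici 0) ?_ ?_ ?_
      · exact fun y _ =>
          ((fbias_hasDerivAt hθ0.le hθ1 y).differentiableAt).continuousAt.continuousWithinAt
      · exact fun y _ =>
          ((fbias_hasDerivAt hθ0.le hθ1 y).differentiableAt).differentiableWithinAt
      · intro x hx y hy hxy
        rw [interior_Ici] at hx hy
        rw [(fbias_hasDerivAt hθ0.le hθ1 x).deriv, (fbias_hasDerivAt hθ0.le hθ1 y).deriv]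
        have h0 : 0 ≤ Real.sinh (x / 2) := Real.sinh_nonneg_iff.2 (by linarith [(show (0:ℝ) < x from hx).le])
        have h1 : Real.sinh (x / 2) ≤ Real.sinh (y / 2) := Real.sinh_le_sinh.2 (by linarith)
        have h2 : Real.sinh (x / 2) ^ 2 ≤ Real.sinh (y / 2) ^ 2 := by nlinarith
        have hθ2 : (0:ℝ) ≤ 1 - θ ^ 2 := by nlinarith
        have hpos : 0 < 1 + (1 - θ ^ 2) * Real.sinh (x / 2) ^ 2 := by
          nlinarith [mul_nonneg hθ2 (sq_nonneg (Real.sinh (x / 2)))]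
        gcongr
  · intro a b ha hab hb
    have hb0 : 0 < b := lt_of_lt_of_le ha hab
    refine ⟨(1 - b ^ 2) / 30, 1 / 4, by nlinarith, by nlinarith, ?_⟩
    rintro θ ⟨hθa, hθb⟩ x hx
    have hθ0 : 0 < θ := lt_of_lt_of_le ha hθa
    have hθ1 : θ < 1 := lt_of_le_of_lt hθb hb
    exact ⟨lower_bound hθ0 hθ1 hx, upper_bound hθ0 hθb hb hx⟩
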